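/- Let (V, W) be jointly Gaussian random variables with mean (ν_v, ν_w) and positive definite covariance matrix Σ = [[σ_v², γ], [γ, σ_w²]]. Then the random variable X = W/V has probability density h(x) = (e^{-c} / (2π |Σ|^{1/2} a(x))) · ₁F₁(1, 1/2, b(x)²/a(x)), where a(x) = (σ_w² − 2γx + σ_v²x²)/(2|Σ|), b(x) = (σ_w²ν_v − γν_w − γν_v x + σ_v²ν_w x)/(2|Σ|), c = (σ_w²ν_v² − 2γν_wν_v + σ_v²ν_w²)/(2|Σ|), and |Σ| = σ_v²σ_w² − γ². -/

import Mathlib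

/-- The confluent hypergeometric function of the first kind,
`₁F₁(a, b, z) = ∑_{k≥0} (a)_k z^k / ((b)_k k!)`. -/
noncomputable def hyp1F1 (a b z : ℝ) : ℝ :=
  ∑' k : ℕ, ((ascPochhammer ℝ k).eval a * z ^ k) /
    ((ascPochhammer ℝ k).eval b * (Nat.factorial k))

open Real MeasureTheory Set


lemma poch_half (k : ℕ) :
    (ascPochhammer ℝ k).eval (1/2 : ℝ) * (4 ^ k * (Nat.factorial k : ℝ)) =
      (Nat.factorial (2 * k) : ℝ) := by
  induction k with
  | zero => simp
  | succ n ih =>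
    rw [ascPochhammer_succ_eval]
    have h2 : (2 * (n + 1)) = (2 * n + 1) + 1 := by ring
    rw [h2, Nat.factorial_succ, Nat.factorial_succ, Nat.factorial_succ, pow_succ]
    push_cast
    linear_combination (4*(1/2+(n:ℝ))*((n:ℝ)+1)) * ih

lemma poch_half_pos (k : ℕ) : 0 < (ascPochhammer ℝ k).eval (1/2 : ℝ) := by
  have h := poch_half k
  have h4 : (0:ℝ) < 4 ^ k * (Nat.factorial k : ℝ) := by positivity
  have : (0:ℝ) < (Nat.factorial (2*k) : ℝ) := by positivity
  nlinarith

lemma moment_lemma {a : ℝ} (ha : 0 < a) (m : ℕ) :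
    ∫ v in Ioi (0:ℝ), v ^ (2*m+1) * Real.exp (-(a * v^2)) =
      (Nat.factorial m : ℝ) / (2 * a ^ (m+1)) := by
  have key := integral_comp_rpow_Ioi_of_pos (p := 2)
    (g := fun y : ℝ => y ^ (m:ℝ) * Real.exp (-(a * y))) (by norm_num)
  have hL : ∫ x in Ioi (0:ℝ), (2 * x ^ ((2:ℝ) - 1)) •
      ((x ^ (2:ℝ)) ^ (m:ℝ) * Real.exp (-(a * x ^ (2:ℝ))))
      = 2 * ∫ v in Ioi (0:ℝ), v ^ (2*m+1) * Real.exp (-(a * v^2)) := by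
    rw [← integral_const_mul]
    refine setIntegral_congr_fun measurableSet_Ioi (fun x hx => ?_)
    have hx0 : (0:ℝ) < x := hx
    have h1 : x ^ ((2:ℝ) - 1) = x := by
      norm_num
    have h2 : x ^ (2:ℝ) = x ^ 2 := by
      rw [← Real.rpow_natCast x 2]; norm_num
    have h3 : (x ^ 2) ^ (m:ℝ) = x ^ (2*m) := by
      rw [Real.rpow_natCast, ← pow_mul]
    rw [smul_eq_mul, h1, h2, h3]
    ring
  have hR : ∫ y in Ioi (0:ℝ), y ^ (m:ℝ) * Real.exp (-(a * y)) =
      (Nat.factorial m : ℝ) / a ^ (m+1) := by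
    have := integral_rpow_mul_exp_neg_mul_Ioi (a := (m:ℝ)+1) (r := a)
      (by positivity) ha
    have he : ((m:ℝ) + 1 - 1) = (m:ℝ) := by ring
    rw [he] at this
    rw [this, Real.Gamma_nat_eq_factorial]
    rw [show ((m:ℝ)+1) = ((m+1 : ℕ) : ℝ) by push_cast; ring, Real.rpow_natCast]
    rw [div_pow, one_pow]
    ring
  rw [hL, hR] at key
  field_simp at key ⊢
  linarith

lemma integrable_abs_exp {a : ℝ} (ha : 0 < a) (b : ℝ) :
    Integrable fun v : ℝ => |v| * Real.exp (-(a*v^2) + 2*b*v) := by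
  have h1 : Integrable (fun t : ℝ => |t| * Real.exp (-(a*t^2))) := by
    have := (integrable_mul_exp_neg_mul_sq ha).abs
    refine this.congr (Filter.Eventually.of_forall fun t => ?_)
    simp only [abs_mul, abs_of_pos (Real.exp_pos _), neg_mul]
  have hH : Integrable (fun t : ℝ => (|t| + |b/a|) * Real.exp (-(a * t^2))) := by
    have := h1.add ((integrable_exp_neg_mul_sq ha).const_mul |b/a|)
    refine this.congr (Filter.Eventually.of_forall fun t => ?_)
    simp only [Pi.add_apply, neg_mul]
    ring
  have hshift : Integrable (fun v : ℝ =>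
      (|v - b/a| + |b/a|) * Real.exp (-(a*(v - b/a)^2))) :=
    hH.comp_sub_right (b/a)
  refine ((hshift.const_mul (Real.exp (b^2/a))).mono' ?_ ?_)
  · exact (continuous_abs.mul ((continuous_const.mul (continuous_id.pow 2)).neg.add
      ((continuous_const.mul continuous_id))).rexp).aestronglyMeasurable
  · refine Filter.Eventually.of_forall fun v => ?_
    have hid : -(a*v^2) + 2*b*v = b^2/a + (-(a*(v - b/a)^2)) := by
      field_simp; ring
    rw [Real.norm_eq_abs, abs_mul, abs_abs, abs_of_pos (Real.exp_pos _), hid, Real.exp_add]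
    have hv : |v| ≤ |v - b/a| + |b/a| := by
      calc |v| = |(v - b/a) + b/a| := by ring_nf
      _ ≤ |v - b/a| + |b/a| := abs_add_le _ _
    calc |v| * (Real.exp (b^2/a) * Real.exp (-(a*(v-b/a)^2)))
        ≤ (|v - b/a| + |b/a|) * (Real.exp (b^2/a) * Real.exp (-(a*(v-b/a)^2))) := by
          apply mul_le_mul_of_nonneg_right hv; positivity
      _ = Real.exp (b^2/a) * ((|v - b/a| + |b/a|) * Real.exp (-(a*(v-b/a)^2))) := by ring

lemma integral_abs_exp {a : ℝ} (ha : 0 < a) (b : ℝ) :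
    ∫ v : ℝ, |v| * Real.exp (-(a*v^2) + 2*b*v)
      = (1/a) * hyp1F1 1 (1/2) (b^2/a) := by
  set h : ℝ → ℝ := fun v => |v| * Real.exp (-(a*v^2) + 2*b*v) with hh
  have hint : Integrable h := integrable_abs_exp ha b
  set g : ℕ → ℝ → ℝ := fun m v => (2*b)^(2*m) / (Nat.factorial (2*m) : ℝ) *
    (2 * (v ^ (2*m+1) * Real.exp (-(a * v^2)))) with hg
  -- step 1 : split the integral
  have hsplit : ∫ v, h v = ∫ v in Ioi (0:ℝ), (h v + h (-v)) := by
    have h0 : (∫ v in Ioi (0:ℝ), h v) + ∫ v in (Ioi (0:ℝ))ᶜ, h v = ∫ v, h v :=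
      integral_add_compl measurableSet_Ioi hint
    rw [compl_Ioi] at h0
    have h2 : ∫ v in Iic (0:ℝ), h v = ∫ v in Ioi (0:ℝ), h (-v) := by
      rw [integral_comp_neg_Ioi]; norm_num
    rw [integral_add hint.integrableOn (hint.comp_neg.integrableOn), ← h0, h2]
  -- step 2 : pointwise series expansion on Ioi 0
  have hpt : EqOn (fun v => h v + h (-v)) (fun v => ∑' m : ℕ, g m v) (Ioi (0:ℝ)) := by
    intro v hv
    have hv0 : (0:ℝ) < v := hv
    have hch : h v + h (-v) = (2 * (v * Real.exp (-(a*v^2)))) * Real.cosh (2*b*v) := by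
      simp only [hh, abs_neg, abs_of_pos hv0, neg_sq, Real.cosh_eq]
      rw [Real.exp_add, show -(a*v^2) + 2*b*(-v) = -(a*v^2) + -(2*b*v) by ring,
        Real.exp_add]
      ring
    simp only [hch, Real.cosh_eq_tsum, ← tsum_mul_left]
    refine tsum_congr fun m => ?_
    simp only [hg, mul_pow]
    rw [pow_succ]
    push_cast
    ring
  -- step 3 : integrability of each term
  have hgint : ∀ m : ℕ, Integrable (g m) (volume.restrict (Ioi (0:ℝ))) := by
    intro m
    have hbase : IntegrableOn (fun v : ℝ => v ^ (2*m+1) * Real.exp (-(a * v^2)))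
        (Ioi (0:ℝ)) := by
      have h1 := integrableOn_rpow_mul_exp_neg_mul_sq ha
        (s := (2*(m:ℝ)+1)) (by have : (0:ℝ) ≤ m := Nat.cast_nonneg m; linarith)
      refine h1.congr_fun (fun x hx => ?_) measurableSet_Ioi
      dsimp only
      rw [show (2*(m:ℝ)+1) = ((2*m+1 : ℕ):ℝ) by push_cast; ring, Real.rpow_natCast]
      rw [neg_mul]
    exact ((hbase.const_mul 2).const_mul _)
  -- step 4 : value of each term integral
  have hIg : ∀ m : ℕ, ∫ v in Ioi (0:ℝ), g m v =
      (2*b)^(2*m) * (Nat.factorial m : ℝ) / ((Nat.factorial (2*m) : ℝ) * a^(m+1)) := by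
    intro m
    simp only [hg]
    rw [MeasureTheory.integral_const_mul, MeasureTheory.integral_const_mul,
      moment_lemma ha m]
    have h2m : (Nat.factorial (2*m) : ℝ) ≠ 0 := by positivity
    field_simp
  -- step 5 : summability of integrals of norms
  have hfact : ∀ m : ℕ, (Nat.factorial m : ℝ) * (Nat.factorial m : ℝ)
      ≤ (Nat.factorial (2*m) : ℝ) := by
    intro m
    have hdvd := Nat.factorial_mul_factorial_dvd_factorial_add m m
    have hle : m.factorial * m.factorial ≤ (m + m).factorial :=
      Nat.le_of_dvd (Nat.factorial_pos _) hdvd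
    rw [show 2*m = m + m by ring]
    exact_mod_cast hle
  have hnormval : ∀ m : ℕ, ∫ v in Ioi (0:ℝ), ‖g m v‖ = ∫ v in Ioi (0:ℝ), g m v := by
    intro m
    refine setIntegral_congr_fun measurableSet_Ioi (fun v hv => ?_)
    have hv0 : (0:ℝ) < v := hv
    have hb2 : (0:ℝ) ≤ (2*b)^(2*m) := by rw [pow_mul]; positivity
    have hnn : 0 ≤ g m v := by
      simp only [hg]
      apply mul_nonneg (div_nonneg hb2 (by positivity))
      positivity
    rw [Real.norm_eq_abs, abs_of_nonneg hnn]
  have hsum : Summable fun m : ℕ => ∫ v in Ioi (0:ℝ), ‖g m v‖ := by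
    have hc : Summable (fun m : ℕ => (4*b^2/a)^m / (Nat.factorial m : ℝ) * (1/a)) :=
      (Real.summable_pow_div_factorial (4*b^2/a)).mul_right _
    refine Summable.of_nonneg_of_le (fun m => ?_) (fun m => ?_) hc
    · exact integral_nonneg fun v => norm_nonneg _
    · rw [hnormval m, hIg m]
      have h2m : (0:ℝ) < (Nat.factorial (2*m):ℝ) := by positivity
      have hm : (0:ℝ) < (Nat.factorial m:ℝ) := by positivity
      have hb4 : (0:ℝ) ≤ (4*b^2)^m := by positivity
      have he1 : (2*b)^(2*m) = (4*b^2)^m := by rw [pow_mul]; ring_nf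
      have he2 : (4*b^2/a)^m / (Nat.factorial m:ℝ) * (1/a)
          = (4*b^2)^m / ((Nat.factorial m:ℝ) * a^(m+1)) := by
        rw [div_pow, pow_succ]; ring
      rw [he1, he2, div_le_div_iff₀ (by positivity) (by positivity)]
      calc (4*b^2)^m * (Nat.factorial m:ℝ) * ((Nat.factorial m:ℝ) * a^(m+1))
          = ((4*b^2)^m * a^(m+1)) * ((Nat.factorial m:ℝ) * (Nat.factorial m:ℝ)) := by ring
        _ ≤ ((4*b^2)^m * a^(m+1)) * (Nat.factorial (2*m):ℝ) := by
            apply mul_le_mul_of_nonneg_left (hfact m); positivity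
        _ = (4*b^2)^m * ((Nat.factorial (2*m):ℝ) * a^(m+1)) := by ring
  -- step 6 : put everything together
  rw [hsplit, setIntegral_congr_fun measurableSet_Ioi hpt,
    ← MeasureTheory.integral_tsum_of_summable_integral_norm hgint hsum]
  rw [tsum_congr hIg, hyp1F1, ← tsum_mul_left]
  refine tsum_congr fun m => ?_
  rw [ascPochhammer_eval_one]
  have hP := poch_half m
  have hPpos := poch_half_pos m
  have h2m : (0:ℝ) < (Nat.factorial (2*m):ℝ) := by positivity
  have hm : (0:ℝ) < (Nat.factorial m:ℝ) := by positivity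
  have hP' : (ascPochhammer ℝ m).eval (1/2:ℝ)
      = (Nat.factorial (2*m):ℝ) / (4^m * (Nat.factorial m:ℝ)) := by
    rw [eq_div_iff (by positivity)]
    linarith [hP]
  rw [hP', pow_mul, div_pow]
  field_simp
  ring

lemma gauss_exp_arg (νv νw σv σw γ v w : ℝ) (h1 : σv ≠ 0) (hD : σv^2*σw^2 - γ^2 ≠ 0) :
    -(1/(2*σv^2)) * (v-νv)^2 + -(σv^2/(2*(σv^2*σw^2 - γ^2))) * (w - (νw + γ/σv^2*(v-νv)))^2
      = -(1/(2*(σv^2*σw^2 - γ^2))) * (σw^2*(v-νv)^2 - 2*γ*(v-νv)*(w-νw) + σv^2*(w-νw)^2) := by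
  field_simp
  ring

lemma integrable_gauss2d (νv νw σv σw γ : ℝ) (hσv : 0 < σv) (hσw : 0 < σw)
    (hdet : 0 < σv^2*σw^2 - γ^2) :
    Integrable (fun p : ℝ × ℝ => Real.exp (-(1/(2*(σv^2*σw^2 - γ^2))) *
      (σw^2*(p.1-νv)^2 - 2*γ*(p.1-νv)*(p.2-νw) + σv^2*(p.2-νw)^2))) := by
  set D := σv^2*σw^2 - γ^2 with hD
  set α := σv^2/(2*D) with hα
  set β := 1/(2*σv^2) with hβ
  have hα0 : 0 < α := by positivity
  have hβ0 : 0 < β := by positivity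
  have hσv2 : σv^2 ≠ 0 := by positivity
  have hD0 : D ≠ 0 := ne_of_gt hdet
  set F : ℝ × ℝ → ℝ := fun p => Real.exp (-β * (p.1-νv)^2) *
    Real.exp (-α * (p.2 - (νw + γ/σv^2*(p.1-νv)))^2) with hF
  have hFeq : ∀ p : ℝ × ℝ, F p = Real.exp (-(1/(2*D)) *
      (σw^2*(p.1-νv)^2 - 2*γ*(p.1-νv)*(p.2-νw) + σv^2*(p.2-νw)^2)) := by
    intro p
    simp only [hF]
    rw [← Real.exp_add]
    congr 1
    rw [hβ, hα, hD]
    exact gauss_exp_arg νv νw σv σw γ p.1 p.2 (ne_of_gt hσv) (ne_of_gt hdet)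
  have hFcont : Continuous F := by fun_prop
  have hFint : Integrable F := by
    rw [Measure.volume_eq_prod]
    refine (integrable_prod_iff (hFcont.aestronglyMeasurable)).2 ⟨?_, ?_⟩
    · refine Filter.Eventually.of_forall fun v => ?_
      simp only [hF]
      exact ((integrable_exp_neg_mul_sq hα0).comp_sub_right
        (νw + γ/σv^2*(v-νv))).const_mul _
    · have hval : ∀ v : ℝ, (∫ w : ℝ, ‖F (v, w)‖) =
          Real.sqrt (Real.pi/α) * Real.exp (-β * (v-νv)^2) := by
        intro v
        have : (fun w : ℝ => ‖F (v, w)‖) = fun w => Real.exp (-β * (v-νv)^2) *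
            Real.exp (-α * (w - (νw + γ/σv^2*(v-νv)))^2) := by
          funext w
          rw [Real.norm_eq_abs, hF, abs_of_pos (by positivity)]
        rw [this, MeasureTheory.integral_const_mul,
          integral_sub_right_eq_self (fun w => Real.exp (-α * w^2)) _,
          integral_gaussian]
        ring
      refine ((((integrable_exp_neg_mul_sq hβ0).comp_sub_right νv).const_mul
        (Real.sqrt (Real.pi/α))).congr ?_)
      exact Filter.Eventually.of_forall fun v => (hval v).symm
  exact hFint.congr (Filter.Eventually.of_forall hFeq)


noncomputable def Bmat (q : ℝ × ℝ) : ℝ × ℝ →L[ℝ] ℝ × ℝ :=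
  LinearMap.toContinuousLinearMap (Matrix.toLin (Module.Basis.finTwoProd ℝ) (Module.Basis.finTwoProd ℝ)
    !![0, 1; q.2, q.1])

lemma hasFDerivAt_T (q : ℝ × ℝ) :
    HasFDerivAt (fun q : ℝ × ℝ => (q.2, q.1 * q.2)) (Bmat q) q := by
  unfold Bmat
  rw [Matrix.toLin_finTwoProd_toContinuousLinearMap]
  have h : HasFDerivAt (fun q : ℝ × ℝ => (q.2, q.1 * q.2))
      ((ContinuousLinearMap.snd ℝ ℝ ℝ).prod
        (q.1 • ContinuousLinearMap.snd ℝ ℝ ℝ + q.2 • ContinuousLinearMap.fst ℝ ℝ ℝ)) q :=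
    HasFDerivAt.prodMk hasFDerivAt_snd (HasFDerivAt.mul hasFDerivAt_fst hasFDerivAt_snd)
  refine h.congr_fderiv ?_
  refine ContinuousLinearMap.ext fun v => ?_
  simp [Prod.ext_iff]
  ring

lemma Bmat_det (q : ℝ × ℝ) : (Bmat q).det = -q.2 := by
  unfold Bmat
  simp only [LinearMap.det_toContinuousLinearMap, LinearMap.det_toLin,
    Matrix.det_fin_two_of]
  ring

lemma quad_pos {σv σw γ : ℝ} (hσv : 0 < σv)
    (hdet : 0 < σv ^ 2 * σw ^ 2 - γ ^ 2) (x : ℝ) :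
    0 < σw ^ 2 - 2 * γ * x + σv ^ 2 * x ^ 2 := by
  nlinarith [sq_nonneg (σv ^ 2 * x - γ), pow_pos hσv 2]

lemma exp_arg_split (νv νw σv σw γ x v : ℝ) (hd : σv ^ 2 * σw ^ 2 - γ ^ 2 ≠ 0) :
    -(1 / (2 * (σv ^ 2 * σw ^ 2 - γ ^ 2))) *
        (σw ^ 2 * (v - νv) ^ 2 - 2 * γ * (v - νv) * (x * v - νw) +
          σv ^ 2 * (x * v - νw) ^ 2)
      = -(((σw ^ 2 - 2 * γ * x + σv ^ 2 * x ^ 2) / (2 * (σv ^ 2 * σw ^ 2 - γ ^ 2))) * v ^ 2)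
        + 2 * ((σw ^ 2 * νv - γ * νw - γ * νv * x + σv ^ 2 * νw * x) /
            (2 * (σv ^ 2 * σw ^ 2 - γ ^ 2))) * v
        + -((σw ^ 2 * νv ^ 2 - 2 * γ * νw * νv + σv ^ 2 * νw ^ 2) /
            (2 * (σv ^ 2 * σw ^ 2 - γ ^ 2))) := by
  field_simp
  ring

lemma inner_eval (νv νw σv σw γ x : ℝ) (hσv : 0 < σv) (hσw : 0 < σw)
    (hdet : 0 < σv ^ 2 * σw ^ 2 - γ ^ 2) :
    (∫ v : ℝ, |v| * ((1 / (2 * Real.pi * Real.sqrt (σv ^ 2 * σw ^ 2 - γ ^ 2))) *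
        Real.exp (-(1 / (2 * (σv ^ 2 * σw ^ 2 - γ ^ 2))) *
          (σw ^ 2 * (v - νv) ^ 2 - 2 * γ * (v - νv) * (x * v - νw) +
            σv ^ 2 * (x * v - νw) ^ 2))))
      = (Real.exp (-((σw ^ 2 * νv ^ 2 - 2 * γ * νw * νv + σv ^ 2 * νw ^ 2) /
            (2 * (σv ^ 2 * σw ^ 2 - γ ^ 2)))) /
          (2 * Real.pi * Real.sqrt (σv ^ 2 * σw ^ 2 - γ ^ 2) *
            ((σw ^ 2 - 2 * γ * x + σv ^ 2 * x ^ 2) /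
              (2 * (σv ^ 2 * σw ^ 2 - γ ^ 2))))) *
        hyp1F1 1 (1 / 2)
          (((σw ^ 2 * νv - γ * νw - γ * νv * x + σv ^ 2 * νw * x) /
              (2 * (σv ^ 2 * σw ^ 2 - γ ^ 2))) ^ 2 /
            ((σw ^ 2 - 2 * γ * x + σv ^ 2 * x ^ 2) /
              (2 * (σv ^ 2 * σw ^ 2 - γ ^ 2)))) := by
  have hd : σv ^ 2 * σw ^ 2 - γ ^ 2 ≠ 0 := ne_of_gt hdet
  have hsq : (0:ℝ) < Real.sqrt (σv ^ 2 * σw ^ 2 - γ ^ 2) := Real.sqrt_pos.mpr hdet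
  have ha : 0 < (σw ^ 2 - 2 * γ * x + σv ^ 2 * x ^ 2) / (2 * (σv ^ 2 * σw ^ 2 - γ ^ 2)) :=
    div_pos (quad_pos hσv hdet x) (by positivity)
  have hstep : (fun v : ℝ => |v| * ((1 / (2 * Real.pi * Real.sqrt (σv ^ 2 * σw ^ 2 - γ ^ 2))) *
      Real.exp (-(1 / (2 * (σv ^ 2 * σw ^ 2 - γ ^ 2))) *
        (σw ^ 2 * (v - νv) ^ 2 - 2 * γ * (v - νv) * (x * v - νw) +
          σv ^ 2 * (x * v - νw) ^ 2))))
      = fun v : ℝ => ((1 / (2 * Real.pi * Real.sqrt (σv ^ 2 * σw ^ 2 - γ ^ 2))) *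
          Real.exp (-((σw ^ 2 * νv ^ 2 - 2 * γ * νw * νv + σv ^ 2 * νw ^ 2) /
            (2 * (σv ^ 2 * σw ^ 2 - γ ^ 2))))) *
        (|v| * Real.exp (-(((σw ^ 2 - 2 * γ * x + σv ^ 2 * x ^ 2) /
            (2 * (σv ^ 2 * σw ^ 2 - γ ^ 2))) * v ^ 2) +
          2 * ((σw ^ 2 * νv - γ * νw - γ * νv * x + σv ^ 2 * νw * x) /
            (2 * (σv ^ 2 * σw ^ 2 - γ ^ 2))) * v)) := by
    funext v
    rw [exp_arg_split νv νw σv σw γ x v hd, Real.exp_add, Real.exp_add]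
    ring
  rw [hstep, MeasureTheory.integral_const_mul,
    integral_abs_exp ha ((σw ^ 2 * νv - γ * νw - γ * νv * x + σv ^ 2 * νw * x) /
      (2 * (σv ^ 2 * σw ^ 2 - γ ^ 2)))]
  have hane : (σw ^ 2 - 2 * γ * x + σv ^ 2 * x ^ 2) / (2 * (σv ^ 2 * σw ^ 2 - γ ^ 2)) ≠ 0 :=
    ne_of_gt ha
  field_simp

theorem stmt4 (νv νw σv σw γ : ℝ) (hσv : 0 < σv) (hσw : 0 < σw)
    (hdet : 0 < σv ^ 2 * σw ^ 2 - γ ^ 2) :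
    ∀ s : Set ℝ, MeasurableSet s →
      (∫ p : ℝ × ℝ in {p : ℝ × ℝ | p.2 / p.1 ∈ s},
          (1 / (2 * Real.pi * Real.sqrt (σv ^ 2 * σw ^ 2 - γ ^ 2))) *
            Real.exp (-(1 / (2 * (σv ^ 2 * σw ^ 2 - γ ^ 2))) *
              (σw ^ 2 * (p.1 - νv) ^ 2 - 2 * γ * (p.1 - νv) * (p.2 - νw) +
                σv ^ 2 * (p.2 - νw) ^ 2)))
        = ∫ x in s,
            (Real.exp (-((σw ^ 2 * νv ^ 2 - 2 * γ * νw * νv + σv ^ 2 * νw ^ 2) /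
                  (2 * (σv ^ 2 * σw ^ 2 - γ ^ 2)))) /
                (2 * Real.pi * Real.sqrt (σv ^ 2 * σw ^ 2 - γ ^ 2) *
                  ((σw ^ 2 - 2 * γ * x + σv ^ 2 * x ^ 2) /
                    (2 * (σv ^ 2 * σw ^ 2 - γ ^ 2))))) *
              hyp1F1 1 (1 / 2)
                (((σw ^ 2 * νv - γ * νw - γ * νv * x + σv ^ 2 * νw * x) /
                    (2 * (σv ^ 2 * σw ^ 2 - γ ^ 2))) ^ 2 /
                  ((σw ^ 2 - 2 * γ * x + σv ^ 2 * x ^ 2) /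
                    (2 * (σv ^ 2 * σw ^ 2 - γ ^ 2)))) := by
  intro s hs
  set f : ℝ × ℝ → ℝ := fun p =>
    (1 / (2 * Real.pi * Real.sqrt (σv ^ 2 * σw ^ 2 - γ ^ 2))) *
      Real.exp (-(1 / (2 * (σv ^ 2 * σw ^ 2 - γ ^ 2))) *
        (σw ^ 2 * (p.1 - νv) ^ 2 - 2 * γ * (p.1 - νv) * (p.2 - νw) +
          σv ^ 2 * (p.2 - νw) ^ 2)) with hf
  have hfint : Integrable f :=
    (integrable_gauss2d νv νw σv σw γ hσv hσw hdet).const_mul _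
  have hnull1 : volume {p : ℝ × ℝ | p.1 = 0} = 0 := by
    have he : {p : ℝ × ℝ | p.1 = 0} = ({0} : Set ℝ) ×ˢ (univ : Set ℝ) := by
      ext ⟨p1, p2⟩; simp [eq_comm]
    rw [he, Measure.volume_eq_prod, Measure.prod_prod]
    simp
  have hnull2 : volume {p : ℝ × ℝ | p.2 = 0} = 0 := by
    have he : {p : ℝ × ℝ | p.2 = 0} = (univ : Set ℝ) ×ˢ ({0} : Set ℝ) := by
      ext ⟨p1, p2⟩; simp [eq_comm]
    rw [he, Measure.volume_eq_prod, Measure.prod_prod]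
    simp
  set T : ℝ × ℝ → ℝ × ℝ := fun q => (q.2, q.1 * q.2) with hT
  set s' : Set (ℝ × ℝ) := s ×ˢ ({0}ᶜ : Set ℝ) with hs'
  have hs'meas : MeasurableSet s' := hs.prod (measurableSet_singleton 0).compl
  have himg : T '' s' = {p : ℝ × ℝ | p.2 / p.1 ∈ s ∧ p.1 ≠ 0} := by
    ext p
    constructor
    · rintro ⟨⟨x, v⟩, ⟨hxs, hv⟩, rfl⟩
      have hv0 : v ≠ 0 := hv
      simp only [hT, mem_setOf_eq]
      refine ⟨?_, hv0⟩
      rw [mul_div_assoc, div_self hv0, mul_one]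
      exact hxs
    · rintro ⟨hps, hp1⟩
      refine ⟨(p.2 / p.1, p.1), ⟨hps, hp1⟩, ?_⟩
      simp only [hT]
      rw [Prod.ext_iff]
      exact ⟨rfl, by field_simp⟩
  have hAae : {p : ℝ × ℝ | p.2 / p.1 ∈ s} =ᵐ[volume] T '' s' := by
    rw [himg]
    have h0 : ∀ᵐ p : ℝ × ℝ, p.1 ≠ 0 := by
      rw [ae_iff]
      simpa using hnull1
    rw [Filter.eventuallyEq_set]
    filter_upwards [h0] with p hp
    simp [hp]
  have hder : ∀ q ∈ s', HasFDerivWithinAt T (Bmat q) s' q :=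
    fun q _ => (hasFDerivAt_T q).hasFDerivWithinAt
  have hinj : InjOn T s' := by
    rintro ⟨x, v⟩ hx ⟨y, w⟩ hy hxy
    simp only [hT, Prod.mk.injEq] at hxy
    obtain ⟨h1, h2⟩ := hxy
    subst h1
    have hv : v ≠ 0 := hx.2
    have hxy2 : x = y := mul_right_cancel₀ hv h2
    simp [hxy2]
  have hs'ae : s' =ᵐ[volume] s ×ˢ (univ : Set ℝ) := by
    have h0 : ∀ᵐ p : ℝ × ℝ, p.2 ≠ 0 := by
      rw [ae_iff]
      simpa using hnull2
    rw [Filter.eventuallyEq_set]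
    filter_upwards [h0] with p hp
    simp [hs', Set.mem_prod, hp]
  have hint2 : IntegrableOn (fun q : ℝ × ℝ => |q.2| * f (T q)) (s ×ˢ (univ : Set ℝ)) := by
    have h1 : IntegrableOn (fun q => |(Bmat q).det| • f (T q)) s' :=
      (integrableOn_image_iff_integrableOn_abs_det_fderiv_smul volume hs'meas hder hinj f).1
        hfint.integrableOn
    have h2 : IntegrableOn (fun q : ℝ × ℝ => |q.2| * f (T q)) s' := by
      refine h1.congr_fun (fun q _ => ?_) hs'meas
      dsimp only
      rw [Bmat_det, abs_neg, smul_eq_mul]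
    rwa [IntegrableOn, Measure.restrict_congr_set hs'ae] at h2
  calc ∫ p in {p : ℝ × ℝ | p.2 / p.1 ∈ s}, f p
      = ∫ p in T '' s', f p := setIntegral_congr_set hAae
    _ = ∫ q in s', |(Bmat q).det| • f (T q) :=
        integral_image_eq_integral_abs_det_fderiv_smul volume hs'meas hder hinj f
    _ = ∫ q in s', |q.2| * f (T q) := by
        refine setIntegral_congr_fun hs'meas fun q _ => ?_
        rw [Bmat_det, abs_neg, smul_eq_mul]
    _ = ∫ q in s ×ˢ (univ : Set ℝ), |q.2| * f (T q) :=
        setIntegral_congr_set hs'ae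
    _ = ∫ x in s, ∫ v : ℝ, |v| * f (v, x * v) := by
        rw [Measure.volume_eq_prod] at hint2 ⊢
        rw [setIntegral_prod _ hint2]
        simp only [hT, Measure.restrict_univ]
    _ = _ := by
        refine setIntegral_congr_fun hs fun x _ => ?_
        simpa only [hf] using inner_eval νv νw σv σw γ x hσv hσw hdet
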